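/- For a simple graph G on N ≥ 2 vertices and distinct vertices i ≠ j, the covariance of A_{i,π(i)} and A_{j,π(j)} over a uniformly random permutation π equals (d_i d_j − N T_{i,j}) / (N²(N−1)), where T_{i,j} = ∑_k A_{i,k} A_{j,k} is the scalar product of rows i and j of A. -/

import Mathlib

open Finset Equiv

/-- The `(x,y)` entry of the adjacency matrix of `G`, as a rational number. -/
def adjQ (N : ℕ) (G : SimpleGraph (Fin N)) [DecidableRel G.Adj] (x y : Fin N) : ℚ :=
  if G.Adj x y then 1 else 0

private lemma sum_perm_single (N : ℕ) (f : Fin N → ℚ) (i : Fin N) :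
    (N : ℚ) * ∑ π : Equiv.Perm (Fin N), f (π i) =
      (Nat.factorial N : ℚ) * ∑ a, f a := by
  have key : ∀ a : Fin N, (∑ π : Equiv.Perm (Fin N), f (π a)) =
      ∑ π : Equiv.Perm (Fin N), f (π i) := by
    intro a
    have := Equiv.sum_comp (Equiv.mulRight (Equiv.swap i a))
      (fun π : Equiv.Perm (Fin N) => f (π i))
    simpa [Equiv.Perm.mul_apply] using this
  have h : ∑ a : Fin N, ∑ π : Equiv.Perm (Fin N), f (π a) =
      (N : ℚ) * ∑ π : Equiv.Perm (Fin N), f (π i) := by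
    simp [key, Finset.card_univ, mul_comm]
  rw [← h, Finset.sum_comm]
  have h2 : ∀ π : Equiv.Perm (Fin N), ∑ a : Fin N, f (π a) = ∑ a, f a :=
    fun π => Equiv.sum_comp π f
  simp [h2, Finset.card_univ, Fintype.card_perm]

private lemma exists_perm_two (N : ℕ) (i j a b : Fin N) (hij : i ≠ j) (hab : a ≠ b) :
    ∃ τ : Equiv.Perm (Fin N), τ i = a ∧ τ j = b := by
  refine ⟨(Equiv.swap (Equiv.swap i a j) b) * (Equiv.swap i a), ?_, ?_⟩
  · simp only [Equiv.Perm.mul_apply, Equiv.swap_apply_left]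
    have h1 : a ≠ Equiv.swap i a j := fun h =>
      hij ((Equiv.swap i a).injective ((Equiv.swap_apply_left i a).trans h))
    exact Equiv.swap_apply_of_ne_of_ne h1 hab
  · simp [Equiv.Perm.mul_apply]

private lemma sum_perm_pair (N : ℕ) (f : Fin N → Fin N → ℚ) (i j : Fin N) (hij : i ≠ j) :
    ((N * N - N : ℕ) : ℚ) * ∑ π : Equiv.Perm (Fin N), f (π i) (π j) =
      (Nat.factorial N : ℚ) * ∑ p ∈ Finset.univ.offDiag, f p.1 p.2 := by
  have key : ∀ p ∈ (Finset.univ : Finset (Fin N)).offDiag,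
      (∑ π : Equiv.Perm (Fin N), f (π p.1) (π p.2)) =
      ∑ π : Equiv.Perm (Fin N), f (π i) (π j) := by
    intro p hp
    rw [Finset.mem_offDiag] at hp
    obtain ⟨τ, hτ1, hτ2⟩ := exists_perm_two N i j p.1 p.2 hij hp.2.2
    have := Equiv.sum_comp (Equiv.mulRight τ)
      (fun π : Equiv.Perm (Fin N) => f (π i) (π j))
    simpa [Equiv.Perm.mul_apply, hτ1, hτ2] using this
  have hπ : ∀ π : Equiv.Perm (Fin N),
      (∑ p ∈ (Finset.univ : Finset (Fin N)).offDiag, f (π p.1) (π p.2)) =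
        ∑ p ∈ Finset.univ.offDiag, f p.1 p.2 := by
    intro π
    refine Finset.sum_equiv (Equiv.prodCongr π π) ?_ ?_
    · intro p
      simp only [Finset.mem_offDiag, Finset.mem_univ, true_and, Equiv.prodCongr_apply,
        Prod.map]
      exact ⟨fun h hh => h (π.injective hh), fun h hh => h (congrArg π hh)⟩
    · intro p _; rfl
  calc ((N * N - N : ℕ) : ℚ) * ∑ π : Equiv.Perm (Fin N), f (π i) (π j)
      = ∑ p ∈ (Finset.univ : Finset (Fin N)).offDiag,
          ∑ π : Equiv.Perm (Fin N), f (π p.1) (π p.2) := by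
        rw [Finset.sum_congr rfl key, Finset.sum_const, nsmul_eq_mul]
        congr 1
        rw [Finset.offDiag_card]
        simp
    _ = ∑ π : Equiv.Perm (Fin N), ∑ p ∈ (Finset.univ : Finset (Fin N)).offDiag,
          f (π p.1) (π p.2) := Finset.sum_comm
    _ = (Nat.factorial N : ℚ) * ∑ p ∈ Finset.univ.offDiag, f p.1 p.2 := by
        rw [Finset.sum_congr rfl (fun π _ => hπ π), Finset.sum_const, nsmul_eq_mul]
        simp [Finset.card_univ, Fintype.card_perm]

private lemma sum_offDiag_eq (N : ℕ) (f : Fin N → Fin N → ℚ) :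
    ∑ p ∈ (Finset.univ : Finset (Fin N)).offDiag, f p.1 p.2 =
      (∑ a, ∑ b, f a b) - ∑ a, f a a := by
  have h : ∑ p ∈ (Finset.univ : Finset (Fin N)) ×ˢ Finset.univ, f p.1 p.2 =
      (∑ p ∈ (Finset.univ : Finset (Fin N)).diag, f p.1 p.2) +
        ∑ p ∈ (Finset.univ : Finset (Fin N)).offDiag, f p.1 p.2 := by
    rw [← Finset.diag_union_offDiag, Finset.sum_union (Finset.disjoint_diag_offDiag _)]
  rw [Finset.sum_product] at h
  rw [Finset.sum_diag (f := fun p => f p.1 p.2)] at h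
  linarith

private lemma sum_adjQ (N : ℕ) (G : SimpleGraph (Fin N)) [DecidableRel G.Adj] (i : Fin N) :
    ∑ a, adjQ N G i a = (G.degree i : ℚ) := by
  simp only [adjQ, Finset.sum_boole]
  rw [SimpleGraph.degree, SimpleGraph.neighborFinset_eq_filter]

theorem covariance_formula (N : ℕ) (hN : 2 ≤ N) (G : SimpleGraph (Fin N))
    [DecidableRel G.Adj] (i j : Fin N) (hij : i ≠ j) :
    (∑ π : Equiv.Perm (Fin N), adjQ N G i (π i) * adjQ N G j (π j)) /
          (Nat.factorial N : ℚ) -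
        ((∑ π : Equiv.Perm (Fin N), adjQ N G i (π i)) / (Nat.factorial N : ℚ)) *
          ((∑ π : Equiv.Perm (Fin N), adjQ N G j (π j)) / (Nat.factorial N : ℚ)) =
      ((G.degree i : ℚ) * (G.degree j : ℚ) -
          (N : ℚ) * ∑ k, adjQ N G i k * adjQ N G j k) /
        ((N : ℚ) ^ 2 * ((N : ℚ) - 1)) := by
  have hN0 : (N : ℚ) ≠ 0 := by
    have : (0:ℚ) < N := by exact_mod_cast Nat.lt_of_lt_of_le (by norm_num) hN
    linarith
  have hN1 : (N : ℚ) - 1 ≠ 0 := by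
    have : (2:ℚ) ≤ N := by exact_mod_cast hN
    intro h; linarith
  have hfac : (Nat.factorial N : ℚ) ≠ 0 := by
    exact_mod_cast Nat.factorial_ne_zero N
  set S2 := ∑ π : Equiv.Perm (Fin N), adjQ N G i (π i) * adjQ N G j (π j) with hS2
  set Si := ∑ π : Equiv.Perm (Fin N), adjQ N G i (π i) with hSi
  set Sj := ∑ π : Equiv.Perm (Fin N), adjQ N G j (π j) with hSj
  set T := ∑ k, adjQ N G i k * adjQ N G j k with hT
  have h1 : (N : ℚ) * Si = (Nat.factorial N : ℚ) * (G.degree i : ℚ) := by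
    rw [hSi, sum_perm_single N (adjQ N G i) i, sum_adjQ]
  have h2 : (N : ℚ) * Sj = (Nat.factorial N : ℚ) * (G.degree j : ℚ) := by
    rw [hSj, sum_perm_single N (adjQ N G j) j, sum_adjQ]
  have h3 : (N : ℚ) * ((N : ℚ) - 1) * S2 =
      (Nat.factorial N : ℚ) * ((G.degree i : ℚ) * (G.degree j : ℚ) - T) := by
    have := sum_perm_pair N (fun a b => adjQ N G i a * adjQ N G j b) i j hij
    try simp only at this
    rw [sum_offDiag_eq N (fun a b => adjQ N G i a * adjQ N G j b)] at this
    have hcast : ((N * N - N : ℕ) : ℚ) = (N : ℚ) * ((N : ℚ) - 1) := by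
      have hle : N ≤ N * N := Nat.le_mul_of_pos_left N (by omega)
      push_cast [Nat.cast_sub hle]
      ring
    rw [hcast] at this
    rw [this]
    congr 1
    have hd : ∑ a, ∑ b, adjQ N G i a * adjQ N G j b =
        (G.degree i : ℚ) * (G.degree j : ℚ) := by
      rw [← sum_adjQ N G i, ← sum_adjQ N G j, Finset.sum_mul_sum]
    rw [hd, hT]
  -- solve for the three sums
  have e1 : Si = (Nat.factorial N : ℚ) * (G.degree i : ℚ) / (N : ℚ) := by
    field_simp; linarith
  have e2 : Sj = (Nat.factorial N : ℚ) * (G.degree j : ℚ) / (N : ℚ) := by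
    field_simp; linarith
  have e3 : S2 = (Nat.factorial N : ℚ) * ((G.degree i : ℚ) * (G.degree j : ℚ) - T) /
      ((N : ℚ) * ((N : ℚ) - 1)) := by
    rw [eq_div_iff (mul_ne_zero hN0 hN1)]
    linarith [h3]
  rw [e1, e2, e3]
  field_simp
  ring
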